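/- For every integer n ≥ 1 with n ≡ 0 or 2 (mod 3), the number s(n) of 1-shell totally symmetric plane partitions of n equals 0. -/

import Mathlib

/-- `sTSPP m` is the number of 1-shell totally symmetric plane partitions of `m`,
defined as the `m`-th coefficient of the generating function
`1 + ∑_{n≥1} q^(3n-2) ∏_{i=0}^{n-2} (1+q^(6i+3))` (truncated at `n ≤ m`, which does
not affect the coefficient of `q^m`). -/
noncomputable def sTSPP (m : ℕ) : ℤ :=
  PowerSeries.coeff m
    (1 + ∑ n ∈ Finset.Icc 1 m,
      (PowerSeries.X : PowerSeries ℤ) ^ (3 * n - 2) *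
        ∏ i ∈ Finset.range (n - 1), (1 + PowerSeries.X ^ (6 * i + 3)))

lemma coeff_prod_eq_zero (k : ℕ) : ∀ d : ℕ, d % 3 ≠ 0 →
    PowerSeries.coeff d (∏ i ∈ Finset.range k,
      (1 + (PowerSeries.X : PowerSeries ℤ) ^ (6 * i + 3))) = 0 := by
  induction k with
  | zero =>
    intro d hd
    simp only [Finset.range_zero, Finset.prod_empty]
    rw [PowerSeries.coeff_one]
    simp only [if_neg (by omega : d ≠ 0)]
  | succ k ih =>
    intro d hd
    rw [Finset.prod_range_succ, mul_add, mul_one, map_add, ih d hd,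
      PowerSeries.coeff_mul_X_pow']
    split_ifs with hle
    · simpa using ih (d - (6 * k + 3)) (by omega)
    · simp

/-- For every `n ≥ 1` with `n ≡ 0` or `2 (mod 3)`, `s(n) = 0`. -/
theorem sTSPP_eq_zero_of_mod_three (n : ℕ) (hn : 1 ≤ n)
    (h : n % 3 = 0 ∨ n % 3 = 2) : sTSPP n = 0 := by
  unfold sTSPP
  rw [map_add, PowerSeries.coeff_one, if_neg (by omega : n ≠ 0), map_sum]
  rw [Finset.sum_eq_zero, zero_add]
  intro m hm
  rw [Finset.mem_Icc] at hm
  rw [mul_comm, PowerSeries.coeff_mul_X_pow']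
  split_ifs with hle
  · exact coeff_prod_eq_zero _ _ (by omega)
  · rfl
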